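/- For every even m = 2r with r ≥ 1, there exists a connected graph G_m such that every spanning tree T of G_m satisfies γ_g(T) − γ_g(G_m) ≥ r − 1. Concretely, one may take G_m to be the graph obtained from a star with center x and leaves v_1,…,v_m by identifying each v_i with a vertex of its own copy of the complete graph K_n (n ≥ 3). -/

import Mathlib

set_option linter.unusedSectionVars false
set_option linter.unusedVariables false
set_option maxHeartbeats 1000000


open Finset

namespace DomGame

variable {V : Type*} [Fintype V] [DecidableEq V]

/-- Closed neighborhood of `v` in `G`, as a `Finset`. -/
noncomputable def cn (G : SimpleGraph V) (v : V) : Finset V :=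
  haveI : DecidablePred (fun u : V => u = v ∨ G.Adj v u) := fun _ => Classical.propDecidable _
  Finset.univ.filter (fun u : V => u = v ∨ G.Adj v u)

/-- Value (number of remaining moves, optimal play) of the domination game on `G`,
with fuel, where `D` is the set of already dominated vertices and `who = true`
means Dominator is to move (minimizing); `who = false` means Staller (maximizing). -/
noncomputable def auxVal (G : SimpleGraph V) : ℕ → Bool → Finset V → ℕ
  | 0, _, _ => 0
  | n + 1, who, D =>
    if D = Finset.univ then 0
    else
      haveI : DecidablePred (fun v : V => ¬ cn G v ⊆ D) := fun _ => Classical.propDecidable _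
      let moves : Finset V := Finset.univ.filter (fun v : V => ¬ cn G v ⊆ D)
      if who then
        WithTop.untopD 0 ((moves.image (fun v => 1 + auxVal G n false (D ∪ cn G v))).min)
      else
        moves.sup (fun v => 1 + auxVal G n true (D ∪ cn G v))

/-- Remaining moves of the domination game on the partially dominated graph `(G, D)`,
Dominator to move, both players optimal. -/
noncomputable def gVal (G : SimpleGraph V) (D : Finset V) : ℕ :=
  auxVal G (Fintype.card V) true D

/-- Remaining moves, Staller to move. -/
noncomputable def gVal' (G : SimpleGraph V) (D : Finset V) : ℕ :=
  auxVal G (Fintype.card V) false D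

/-- The game domination number (Dominator starts). -/
noncomputable def gammaG (G : SimpleGraph V) : ℕ := gVal G ∅

/-- The Staller-start game domination number. -/
noncomputable def gammaG' (G : SimpleGraph V) : ℕ := gVal' G ∅

/-- `S` is a dominating set of `G`. -/
def IsDomSet (G : SimpleGraph V) (S : Finset V) : Prop :=
  ∀ v : V, ∃ u ∈ S, u = v ∨ G.Adj u v

/-- The domination number of `G`. -/
noncomputable def gamma (G : SimpleGraph V) : ℕ :=
  sInf {n | ∃ S : Finset V, IsDomSet G S ∧ S.card = n}


lemma mem_cn {G : SimpleGraph V} {v u : V} : u ∈ cn G v ↔ u = v ∨ G.Adj v u := by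
  rw [cn]
  simp only [Finset.mem_filter, Finset.mem_univ, true_and]

lemma self_mem_cn {G : SimpleGraph V} (v : V) : v ∈ cn G v :=
  mem_cn.2 (Or.inl rfl)

lemma exists_legal {G : SimpleGraph V} {D : Finset V} (h : D ≠ Finset.univ) :
    ∃ v, ¬ cn G v ⊆ D := by
  obtain ⟨v, hv⟩ : ∃ v, v ∉ D := by
    by_contra hc
    push_neg at hc
    exact h (Finset.eq_univ_iff_forall.2 hc)
  exact ⟨v, fun hs => hv (hs (self_mem_cn v))⟩

private lemma untop'_min_le {s : Finset ℕ} {a : ℕ} (h : a ∈ s) :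
    WithTop.untopD 0 s.min ≤ a := by
  obtain ⟨b, hb⟩ := Finset.min_of_mem h
  have hle := Finset.min_le h
  rw [hb] at hle ⊢
  exact_mod_cast hle

private lemma le_untop'_min {s : Finset ℕ} (hne : s.Nonempty) {k : ℕ}
    (h : ∀ a ∈ s, k ≤ a) : k ≤ WithTop.untopD 0 s.min := by
  obtain ⟨b, hb⟩ := Finset.min_of_nonempty hne
  have hbmem := Finset.mem_of_min hb
  rw [hb]
  exact h b hbmem

lemma auxVal_univ (G : SimpleGraph V) (f : ℕ) (who : Bool) :
    auxVal G f who Finset.univ = 0 := by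
  cases f with
  | zero => rfl
  | succ n => simp [auxVal]

lemma auxVal_true_le (G : SimpleGraph V) (n : ℕ) {D : Finset V} (hu : D ≠ Finset.univ)
    {v : V} (hleg : ¬ cn G v ⊆ D) :
    auxVal G (n+1) true D ≤ 1 + auxVal G n false (D ∪ cn G v) := by
  simp only [auxVal, hu, if_false, if_true]
  apply untop'_min_le
  simp only [Finset.mem_image, Finset.mem_filter, Finset.mem_univ, true_and]
  exact ⟨v, hleg, rfl⟩

lemma le_auxVal_true (G : SimpleGraph V) (n : ℕ) {D : Finset V} (hu : D ≠ Finset.univ)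
    {k : ℕ} (hk : ∀ v, ¬ cn G v ⊆ D → k ≤ 1 + auxVal G n false (D ∪ cn G v)) :
    k ≤ auxVal G (n+1) true D := by
  simp only [auxVal, hu, if_false, if_true]
  obtain ⟨v0, hleg0⟩ := exists_legal (G := G) hu
  apply le_untop'_min
  · refine ⟨1 + auxVal G n false (D ∪ cn G v0), ?_⟩
    simp only [Finset.mem_image, Finset.mem_filter, Finset.mem_univ, true_and]
    exact ⟨v0, hleg0, rfl⟩
  · intro a ha
    simp only [Finset.mem_image, Finset.mem_filter, Finset.mem_univ, true_and] at ha
    obtain ⟨v, hv, rfl⟩ := ha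
    exact hk v hv

lemma auxVal_false_le (G : SimpleGraph V) (n : ℕ) {D : Finset V} (hu : D ≠ Finset.univ)
    {k : ℕ} (hk : ∀ v, ¬ cn G v ⊆ D → 1 + auxVal G n true (D ∪ cn G v) ≤ k) :
    auxVal G (n+1) false D ≤ k := by
  simp only [auxVal, hu, if_false, Bool.false_eq_true]
  apply Finset.sup_le
  intro v hv
  simp only [Finset.mem_filter, Finset.mem_univ, true_and] at hv
  exact hk v hv

lemma le_auxVal_false (G : SimpleGraph V) (n : ℕ) {D : Finset V} (hu : D ≠ Finset.univ)
    {v : V} (hleg : ¬ cn G v ⊆ D) :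
    1 + auxVal G n true (D ∪ cn G v) ≤ auxVal G (n+1) false D := by
  simp only [auxVal, hu, if_false, Bool.false_eq_true]
  refine Finset.le_sup (f := fun v => 1 + auxVal G n true (D ∪ cn G v)) ?_
  simp only [Finset.mem_filter, Finset.mem_univ, true_and]
  exact hleg

/-- Upper bound via Dominator strategy with invariant `P` and potential `Φ`. -/
lemma auxVal_le (G : SimpleGraph V) (P : Finset V → Prop) (Φ : Finset V → ℕ)
    (hD : ∀ D, P D → D ≠ Finset.univ →
      ∃ v, ¬ cn G v ⊆ D ∧ P (D ∪ cn G v) ∧ Φ (D ∪ cn G v) + 1 ≤ Φ D)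
    (hS : ∀ D v, P D → D ≠ Finset.univ → ¬ cn G v ⊆ D →
      P (D ∪ cn G v) ∧ Φ (D ∪ cn G v) + 1 ≤ Φ D) :
    ∀ f D, P D → auxVal G f true D ≤ Φ D ∧ auxVal G f false D ≤ Φ D := by
  intro f
  induction f with
  | zero => intro D _; constructor <;> simp [auxVal]
  | succ n ih =>
    intro D hP
    by_cases hu : D = Finset.univ
    · subst hu; rw [auxVal_univ, auxVal_univ]; omega
    constructor
    · obtain ⟨v, hleg, hPv, hlt⟩ := hD D hP hu
      have h2 := (ih (D ∪ cn G v) hPv).2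
      have := auxVal_true_le G n hu hleg
      omega
    · apply auxVal_false_le G n hu
      intro v hleg
      obtain ⟨hPv, hlt⟩ := hS D v hP hu hleg
      have := (ih (D ∪ cn G v) hPv).1
      omega

/-- Lower bound via Staller strategy with potentials `Ψd`, `Ψs`. -/
lemma le_auxVal (G : SimpleGraph V) (Ψd Ψs : Finset V → ℕ)
    (hDuniv : Ψd Finset.univ = 0) (hSuniv : Ψs Finset.univ = 0)
    (K1 : ∀ D v, D ≠ Finset.univ → ¬ cn G v ⊆ D → Ψd D ≤ 1 + Ψs (D ∪ cn G v))
    (K2 : ∀ D, D ≠ Finset.univ →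
      Ψs D = 0 ∨ ∃ v, ¬ cn G v ⊆ D ∧ Ψs D ≤ 1 + Ψd (D ∪ cn G v)) :
    ∀ f D, (Finset.univ \ D).card ≤ f →
      Ψd D ≤ auxVal G f true D ∧ Ψs D ≤ auxVal G f false D := by
  intro f
  induction f with
  | zero =>
    intro D hf
    have h0 : Finset.univ \ D = ∅ := Finset.card_eq_zero.1 (Nat.le_zero.1 hf)
    rw [Finset.sdiff_eq_empty_iff_subset, Finset.univ_subset_iff] at h0
    subst h0
    rw [auxVal_univ, auxVal_univ, hDuniv, hSuniv]
    exact ⟨le_refl _, le_refl _⟩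
  | succ n ih =>
    intro D hf
    by_cases hu : D = Finset.univ
    · subst hu; rw [auxVal_univ, auxVal_univ, hDuniv, hSuniv]; exact ⟨le_refl _, le_refl _⟩
    have hfuel : ∀ v : V, ¬ cn G v ⊆ D → (Finset.univ \ (D ∪ cn G v)).card ≤ n := by
      intro v hleg
      obtain ⟨z, hz, hzD⟩ := Finset.not_subset.1 hleg
      have hss : Finset.univ \ (D ∪ cn G v) ⊂ Finset.univ \ D := by
        refine Finset.ssubset_iff_of_subset (Finset.sdiff_subset_sdiff (le_refl _)
          Finset.subset_union_left) |>.2 ?_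
        exact ⟨z, Finset.mem_sdiff.2 ⟨Finset.mem_univ z, hzD⟩,
          fun hmem => (Finset.mem_sdiff.1 hmem).2 (Finset.mem_union_right _ hz)⟩
      have := Finset.card_lt_card hss
      omega
    constructor
    · apply le_auxVal_true G n hu
      intro v hleg
      have := (ih (D ∪ cn G v) (hfuel v hleg)).2
      have := K1 D v hu hleg
      omega
    · rcases K2 D hu with h0 | ⟨v, hleg, hK⟩
      · omega
      · have := (ih (D ∪ cn G v) (hfuel v hleg)).1
        have hle := le_auxVal_false G n hu hleg
        omega


end DomGame

/-- The graph obtained from a star with center `x = none` and leaves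
`v_i = some (i, 0)` by identifying each `v_i` with a vertex of its own
copy of `K_n` (the clique on `{some (i, j) : j}`). -/
def starCliques (m n : ℕ) : SimpleGraph (Option (Fin m × Fin n)) :=
  SimpleGraph.fromRel (fun a b =>
    match a, b with
    | none, some p => (p.2 : ℕ) = 0
    | some p, some q => p.1 = q.1
    | _, _ => False)

section
variable {m n : ℕ}
open DomGame

lemma sc_adj_none_some {p : Fin m × Fin n} :
    (starCliques m n).Adj none (some p) ↔ (p.2 : ℕ) = 0 := by
  simp [starCliques, SimpleGraph.fromRel_adj]

lemma sc_adj_some_some {p q : Fin m × Fin n} :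
    (starCliques m n).Adj (some p) (some q) ↔ p ≠ q ∧ p.1 = q.1 := by
  simp only [starCliques, SimpleGraph.fromRel_adj]
  constructor
  · rintro ⟨hne, h | h⟩ <;> simp_all
  · rintro ⟨hne, h⟩
    exact ⟨by simpa using hne, Or.inl h⟩

lemma sc_adj_some_none {p : Fin m × Fin n} :
    (starCliques m n).Adj (some p) none ↔ (p.2 : ℕ) = 0 := by
  rw [SimpleGraph.adj_comm]; exact sc_adj_none_some

lemma mem_cn_none {u : Option (Fin m × Fin n)} (hu : u ∈ cn (starCliques m n) none) :
    u = none ∨ ∃ p : Fin m × Fin n, u = some p ∧ (p.2 : ℕ) = 0 := by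
  rcases mem_cn.1 hu with h | h
  · exact Or.inl h
  · cases u with
    | none => exact Or.inl rfl
    | some p => exact Or.inr ⟨p, rfl, sc_adj_none_some.1 h⟩

lemma mem_cn_some {p : Fin m × Fin n} {u : Option (Fin m × Fin n)}
    (hu : u ∈ cn (starCliques m n) (some p)) :
    u = none ∨ ∃ q : Fin m × Fin n, u = some q ∧ q.1 = p.1 := by
  rcases mem_cn.1 hu with h | h
  · exact Or.inr ⟨p, h, rfl⟩
  · cases u with
    | none => exact Or.inl rfl
    | some q => exact Or.inr ⟨q, rfl, (sc_adj_some_some.1 h).2.symm⟩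

lemma clique_subset_cn_some (p : Fin m × Fin n) (j : Fin n) :
    some (p.1, j) ∈ cn (starCliques m n) (some p) := by
  rcases eq_or_ne (p.1, j) p with h | h
  · exact mem_cn.2 (Or.inl (by rw [h]))
  · exact mem_cn.2 (Or.inr (sc_adj_some_some.2 ⟨fun he => h he.symm, rfl⟩))

lemma leaf_mem_cn_none {i : Fin m} {j : Fin n} (hj : (j : ℕ) = 0) :
    some (i, j) ∈ cn (starCliques m n) none :=
  mem_cn.2 (Or.inr (sc_adj_none_some.2 hj))

/-- The invariant: center and all leaves dominated. -/
def PInv (D : Finset (Option (Fin m × Fin n))) : Prop :=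
  none ∈ D ∧ ∀ (i : Fin m) (j : Fin n), (j : ℕ) = 0 → some (i, j) ∈ D

/-- number of cliques not fully dominated -/
def cCount (m n : ℕ) (D : Finset (Option (Fin m × Fin n))) : ℕ :=
  (Finset.univ.filter (fun i : Fin m => ¬ ∀ j : Fin n, some (i, j) ∈ D)).card

lemma cCount_le (D : Finset (Option (Fin m × Fin n))) : cCount m n D ≤ m := by
  rw [cCount]
  exact le_trans (Finset.card_filter_le _ _) (by simp)

lemma cCount_drop {D : Finset (Option (Fin m × Fin n))} (hP : PInv D)
    {v : Option (Fin m × Fin n)} (hleg : ¬ cn (starCliques m n) v ⊆ D) :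
    cCount m n (D ∪ cn (starCliques m n) v) + 1 ≤ cCount m n D := by
  cases v with
  | none =>
    exfalso
    apply hleg
    intro u hu
    rcases mem_cn_none hu with rfl | ⟨p, rfl, hp⟩
    · exact hP.1
    · exact hP.2 p.1 p.2 hp
  | some p =>
    obtain ⟨w, hw, hwD⟩ := Finset.not_subset.1 hleg
    have hwit : ¬ ∀ j : Fin n, some (p.1, j) ∈ D := by
      rcases mem_cn_some hw with rfl | ⟨q, rfl, hq⟩
      · exact absurd hP.1 hwD
      · intro hall
        have := hall q.2
        rw [hq.symm] at this
        exact hwD this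
    have hfull : ∀ j : Fin n, some (p.1, j) ∈ D ∪ cn (starCliques m n) (some p) :=
      fun j => Finset.mem_union_right _ (clique_subset_cn_some p j)
    have hlt : cCount m n (D ∪ cn (starCliques m n) (some p)) < cCount m n D := by
      rw [cCount, cCount]
      apply Finset.card_lt_card
      rw [Finset.ssubset_iff_of_subset ?hsub]
      case hsub =>
        intro i hi
        simp only [Finset.mem_filter, Finset.mem_univ, true_and] at hi ⊢
        exact fun hall => hi (fun j => Finset.mem_union_left _ (hall j))
      refine ⟨p.1, ?_, ?_⟩
      · simp only [Finset.mem_filter, Finset.mem_univ, true_and]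
        exact hwit
      · simp only [Finset.mem_filter, Finset.mem_univ, true_and, not_not]
        exact hfull
    omega

end

section
variable {m n : ℕ}
open DomGame

lemma gammaG_sc_le (m n : ℕ) (hn : 0 < n) :
    DomGame.gammaG (starCliques m n) ≤ m + 1 := by
  classical
  have hbound := DomGame.auxVal_le (starCliques m n) PInv (cCount m n)
    (by
      intro D hP hu
      obtain ⟨w, hw⟩ : ∃ w, w ∉ D := by
        by_contra hc
        push_neg at hc
        exact hu (Finset.eq_univ_iff_forall.2 hc)
      have hleg : ¬ cn (starCliques m n) w ⊆ D := fun hs => hw (hs (DomGame.self_mem_cn w))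
      exact ⟨w, hleg, ⟨Finset.mem_union_left _ hP.1,
        fun i j hj => Finset.mem_union_left _ (hP.2 i j hj)⟩, cCount_drop hP hleg⟩)
    (by
      intro D v hP hu hleg
      exact ⟨⟨Finset.mem_union_left _ hP.1,
        fun i j hj => Finset.mem_union_left _ (hP.2 i j hj)⟩, cCount_drop hP hleg⟩)
  rw [DomGame.gammaG, DomGame.gVal, Fintype.card_option]
  have hne : (∅ : Finset (Option (Fin m × Fin n))) ≠ Finset.univ := by
    intro h
    have : (none : Option (Fin m × Fin n)) ∈ (∅ : Finset (Option (Fin m × Fin n))) := by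
      rw [h]; exact Finset.mem_univ _
    simp at this
  have hleg0 : ¬ cn (starCliques m n) none ⊆ (∅ : Finset (Option (Fin m × Fin n))) := by
    intro hs
    simpa using hs (DomGame.self_mem_cn none)
  have h1 := DomGame.auxVal_true_le (starCliques m n) (Fintype.card (Fin m × Fin n)) hne hleg0
  have hPinv : PInv ((∅ : Finset (Option (Fin m × Fin n))) ∪ cn (starCliques m n) none) := by
    constructor
    · exact Finset.mem_union_right _ (DomGame.self_mem_cn none)
    · intro i j hj
      exact Finset.mem_union_right _ (leaf_mem_cn_none hj)
  have h2 := (hbound (Fintype.card (Fin m × Fin n))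
    ((∅ : Finset (Option (Fin m × Fin n))) ∪ cn (starCliques m n) none) hPinv).2
  have h3 := cCount_le ((∅ : Finset (Option (Fin m × Fin n))) ∪ cn (starCliques m n) none)
  omega

end
section
variable {m n : ℕ}
open DomGame

/-- clique `i` has some dominated interior vertex -/
def touched (D : Finset (Option (Fin m × Fin n))) (i : Fin m) : Prop :=
  ∃ j : Fin n, (j : ℕ) ≠ 0 ∧ some (i, j) ∈ D

/-- all interior vertices of clique `i` are dominated -/
def finished (D : Finset (Option (Fin m × Fin n))) (i : Fin m) : Prop :=
  ∀ j : Fin n, (j : ℕ) ≠ 0 → some (i, j) ∈ D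

noncomputable def intU (D : Finset (Option (Fin m × Fin n))) : Finset (Fin m) :=
  haveI : DecidablePred (fun i : Fin m => ¬ touched D i) := fun _ => Classical.propDecidable _
  Finset.univ.filter (fun i : Fin m => ¬ touched D i)

noncomputable def intW (D : Finset (Option (Fin m × Fin n))) : Finset (Fin m) :=
  haveI : DecidablePred (fun i : Fin m => touched D i ∧ ¬ finished D i) :=
    fun _ => Classical.propDecidable _
  Finset.univ.filter (fun i : Fin m => touched D i ∧ ¬ finished D i)

lemma mem_intU {D : Finset (Option (Fin m × Fin n))} {i : Fin m} :
    i ∈ intU D ↔ ¬ touched D i := by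
  rw [intU]; simp only [Finset.mem_filter, Finset.mem_univ, true_and]

lemma mem_intW {D : Finset (Option (Fin m × Fin n))} {i : Fin m} :
    i ∈ intW D ↔ touched D i ∧ ¬ finished D i := by
  rw [intW]; simp only [Finset.mem_filter, Finset.mem_univ, true_and]

noncomputable def psiD (D : Finset (Option (Fin m × Fin n))) : ℕ :=
  (intU D).card + (intW D).card + (intU D).card / 2

noncomputable def psiS (D : Finset (Option (Fin m × Fin n))) : ℕ :=
  (intU D).card + (intW D).card + ((intU D).card + 1) / 2

variable {T : SimpleGraph (Option (Fin m × Fin n))} (hT : T ≤ starCliques m n)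

/-- the cn of `none` contains no interior vertex -/
lemma cn_none_interior (hT : T ≤ starCliques m n) {i : Fin m} {j : Fin n}
    (hj : (j : ℕ) ≠ 0) : some (i, j) ∉ cn T none := by
  intro h
  rcases mem_cn.1 h with h | h
  · exact Option.some_ne_none _ h
  · exact hj (sc_adj_none_some.1 (hT h))

/-- the cn of a vertex in clique `i0` contains no interior vertex of other cliques -/
lemma cn_some_interior (hT : T ≤ starCliques m n) {p : Fin m × Fin n} {i : Fin m} {j : Fin n}
    (hi : i ≠ p.1) : some (i, j) ∉ cn T (some p) := by
  intro h
  rcases mem_cn.1 h with h | h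
  · exact hi (congrArg (fun o => (Option.getD o (i,j)).1) h)
  · exact hi ((sc_adj_some_some.1 (hT h)).2.symm)

/-- status of clique `i` is unchanged by a move at `none` -/
lemma unchanged_none (hT : T ≤ starCliques m n) (D : Finset (Option (Fin m × Fin n))) (i : Fin m) :
    (touched (D ∪ cn T none) i ↔ touched D i) ∧
    (finished (D ∪ cn T none) i ↔ finished D i) := by
  constructor
  · constructor
    · rintro ⟨j, hj, hmem⟩
      rcases Finset.mem_union.1 hmem with h | h
      · exact ⟨j, hj, h⟩
      · exact absurd h (cn_none_interior hT hj)
    · rintro ⟨j, hj, hmem⟩; exact ⟨j, hj, Finset.mem_union_left _ hmem⟩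
  · constructor
    · intro hf j hj
      rcases Finset.mem_union.1 (hf j hj) with h | h
      · exact h
      · exact absurd h (cn_none_interior hT hj)
    · intro hf j hj; exact Finset.mem_union_left _ (hf j hj)

lemma unchanged_some (hT : T ≤ starCliques m n) (D : Finset (Option (Fin m × Fin n)))
    {p : Fin m × Fin n} {i : Fin m} (hi : i ≠ p.1) :
    (touched (D ∪ cn T (some p)) i ↔ touched D i) ∧
    (finished (D ∪ cn T (some p)) i ↔ finished D i) := by
  constructor
  · constructor
    · rintro ⟨j, hj, hmem⟩
      rcases Finset.mem_union.1 hmem with h | h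
      · exact ⟨j, hj, h⟩
      · exact absurd h (cn_some_interior hT hi)
    · rintro ⟨j, hj, hmem⟩; exact ⟨j, hj, Finset.mem_union_left _ hmem⟩
  · constructor
    · intro hf j hj
      rcases Finset.mem_union.1 (hf j hj) with h | h
      · exact h
      · exact absurd h (cn_some_interior hT hi)
    · intro hf j hj; exact Finset.mem_union_left _ (hf j hj)

lemma touched_mono {D D' : Finset (Option (Fin m × Fin n))} (h : D ⊆ D') {i : Fin m}
    (ht : touched D i) : touched D' i := by
  obtain ⟨j, hj, hmem⟩ := ht; exact ⟨j, hj, h hmem⟩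

end
section
variable {m n : ℕ}
open DomGame

lemma no_triangle {W : Type*} {T : SimpleGraph W} (hTree : T.IsTree) {x y z : W}
    (hxy : T.Adj x y) (hyz : T.Adj y z) (hxz : T.Adj x z) : False := by
  have hP1 : (SimpleGraph.Walk.cons hxy SimpleGraph.Walk.nil).IsPath := by
    simp [SimpleGraph.Walk.isPath_iff_eq_nil, hxy.ne]
  have hP2 : (SimpleGraph.Walk.cons hxz (SimpleGraph.Walk.cons hyz.symm
      SimpleGraph.Walk.nil)).IsPath := by
    simp [SimpleGraph.Walk.cons_isPath_iff, hxz.ne, hxy.ne, hyz.ne.symm]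
  have := (hTree.existsUnique_path x y).unique hP1 hP2
  have hlen := congrArg SimpleGraph.Walk.length this
  simp at hlen

private lemma some_interior_ne {i0 : Fin m} {j j' : Fin n} (hne : (j : ℕ) ≠ (j' : ℕ))
    (h : (some (i0, j) : Option (Fin m × Fin n)) = some (i0, j')) : False := by
  have := congrArg (fun q : Fin m × Fin n => (q.2 : ℕ)) (Option.some_injective _ h)
  exact hne this

/-- Staller's spoiling move in an untouched clique. -/
lemma spoil {T : SimpleGraph (Option (Fin m × Fin n))} (hT : T ≤ starCliques m n)
    (hTree : T.IsTree) (hn : 3 ≤ n) (i0 : Fin m) :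
    ∃ v : Option (Fin m × Fin n), (∃ jv : Fin n, v = some (i0, jv)) ∧
      (∃ ju : Fin n, (ju : ℕ) ≠ 0 ∧ some (i0, ju) ∈ cn T v) ∧
      (∃ jz : Fin n, (jz : ℕ) ≠ 0 ∧ some (i0, jz) ∉ cn T v) := by
  obtain ⟨j1, hv1⟩ : ∃ j : Fin n, (j : ℕ) = 1 := ⟨⟨1, by omega⟩, rfl⟩
  obtain ⟨j2, hv2⟩ : ∃ j : Fin n, (j : ℕ) = 2 := ⟨⟨2, by omega⟩, rfl⟩
  by_cases hab : T.Adj (some (i0, j1)) (some (i0, j2))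
  · -- find the interior-to-leaf edge via a boundary dart
    obtain ⟨wlk⟩ := hTree.isConnected.preconnected (some (i0, j1)) none
    have hmemS : (some (i0, j1) : Option (Fin m × Fin n)) ∈
        {u : Option (Fin m × Fin n) | ∃ j : Fin n, (j : ℕ) ≠ 0 ∧ u = some (i0, j)} :=
      ⟨j1, by omega, rfl⟩
    have hnotS : (none : Option (Fin m × Fin n)) ∉
        {u : Option (Fin m × Fin n) | ∃ j : Fin n, (j : ℕ) ≠ 0 ∧ u = some (i0, j)} := by
      rintro ⟨j, hj, h⟩; exact Option.some_ne_none _ h.symm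
    obtain ⟨d, -, hdfst, hdsnd⟩ := wlk.exists_boundary_dart _ hmemS hnotS
    obtain ⟨jp, hjp, hfst⟩ := hdfst
    have hadj : T.Adj (some (i0, jp)) d.snd := hfst ▸ d.adj
    obtain ⟨j0, hj0, hsnd⟩ : ∃ j0 : Fin n, (j0 : ℕ) = 0 ∧ d.snd = some (i0, j0) := by
      have hG := hT hadj
      cases hds : d.snd with
      | none =>
        rw [hds] at hG
        exact absurd (sc_adj_some_none.1 hG) hjp
      | some q =>
        rw [hds] at hG
        have hq1 : q.1 = i0 := (sc_adj_some_some.1 hG).2.symm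
        have hq2 : (q.2 : ℕ) = 0 := by
          by_contra hq2
          exact (hds ▸ hdsnd) ⟨q.2, hq2, by rw [← hq1]⟩
        exact ⟨q.2, hq2, by rw [← hq1]⟩
    rw [hsnd] at hadj
    by_cases h1 : T.Adj (some (i0, j0)) (some (i0, j1))
    · by_cases h2 : T.Adj (some (i0, j0)) (some (i0, j2))
      · exact (no_triangle hTree hab h2.symm h1.symm).elim
      · -- play the leaf, witness j2 undominated
        refine ⟨some (i0, j0), ⟨j0, rfl⟩, ⟨j1, by omega, mem_cn.2 (Or.inr h1)⟩,
          ⟨j2, by omega, ?_⟩⟩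
        intro hmem
        rcases mem_cn.1 hmem with h | h
        · exact some_interior_ne (by omega) h
        · exact h2 h
    · -- play the leaf, witness j1 undominated
      refine ⟨some (i0, j0), ⟨j0, rfl⟩, ⟨jp, hjp, mem_cn.2 (Or.inr hadj.symm)⟩,
        ⟨j1, by omega, ?_⟩⟩
      intro hmem
      rcases mem_cn.1 hmem with h | h
      · exact some_interior_ne (by omega) h
      · exact h1 h
  · -- j1 and j2 not adjacent: play j1, witness j2
    refine ⟨some (i0, j1), ⟨j1, rfl⟩, ⟨j1, by omega, self_mem_cn _⟩, ⟨j2, by omega, ?_⟩⟩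
    intro hmem
    rcases mem_cn.1 hmem with h | h
    · exact some_interior_ne (by omega) h
    · exact hab h

end
section
variable {m n : ℕ}
open DomGame

lemma intU_anti {D D' : Finset (Option (Fin m × Fin n))} (h : D ⊆ D') :
    intU D' ⊆ intU D := by
  intro i hi
  rw [mem_intU] at hi ⊢
  exact fun ht => hi (touched_mono h ht)

/-- Any single move decreases `intW` by at most one. -/
lemma intW_card_le {T : SimpleGraph (Option (Fin m × Fin n))} (hT : T ≤ starCliques m n)
    (D : Finset (Option (Fin m × Fin n))) (v : Option (Fin m × Fin n)) :
    (intW D).card ≤ (intW (D ∪ cn T v)).card + 1 := by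
  cases v with
  | none =>
    have : intW D ⊆ intW (D ∪ cn T none) := by
      intro i hi
      rw [mem_intW] at hi ⊢
      rw [(unchanged_none hT D i).1, (unchanged_none hT D i).2]
      exact hi
    have := Finset.card_le_card this
    omega
  | some p =>
    have hsub : intW D ⊆ insert p.1 (intW (D ∪ cn T (some p))) := by
      intro i hi
      rcases eq_or_ne i p.1 with rfl | hne
      · exact Finset.mem_insert_self _ _
      · refine Finset.mem_insert_of_mem ?_
        rw [mem_intW] at hi ⊢
        rw [(unchanged_some hT D hne).1, (unchanged_some hT D hne).2]
        exact hi
    calc (intW D).card ≤ _ := Finset.card_le_card hsub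
      _ ≤ (intW (D ∪ cn T (some p))).card + 1 := Finset.card_insert_le _ _

lemma K1sc {T : SimpleGraph (Option (Fin m × Fin n))} (hT : T ≤ starCliques m n)
    (D : Finset (Option (Fin m × Fin n))) (v : Option (Fin m × Fin n)) :
    psiD D ≤ 1 + psiS (D ∪ cn T v) := by
  rw [psiD, psiS]
  cases v with
  | none =>
    have hU : intU (D ∪ cn T none) = intU D := by
      ext i
      rw [mem_intU, mem_intU, (unchanged_none hT D i).1]
    have hW : intW (D ∪ cn T none) = intW D := by
      ext i
      rw [mem_intW, mem_intW, (unchanged_none hT D i).1, (unchanged_none hT D i).2]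
    rw [hU, hW]
    omega
  | some p =>
    by_cases hU : p.1 ∈ intU D
    · by_cases hU' : p.1 ∈ intU (D ∪ cn T (some p))
      · have hUeq : intU (D ∪ cn T (some p)) = intU D := by
          ext i
          rcases eq_or_ne i p.1 with rfl | hne
          · simp [hU, hU']
          · rw [mem_intU, mem_intU, (unchanged_some hT D hne).1]
        have hWeq : intW (D ∪ cn T (some p)) = intW D := by
          ext i
          rcases eq_or_ne i p.1 with rfl | hne
          · have h1 : p.1 ∉ intW D := fun hw => (mem_intU.1 hU) (mem_intW.1 hw).1
            have h2 : p.1 ∉ intW (D ∪ cn T (some p)) :=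
              fun hw => (mem_intU.1 hU') (mem_intW.1 hw).1
            simp [h1, h2]
          · rw [mem_intW, mem_intW, (unchanged_some hT D hne).1, (unchanged_some hT D hne).2]
        rw [hUeq, hWeq]
        omega
      · have hUeq : intU (D ∪ cn T (some p)) = (intU D).erase p.1 := by
          ext i
          rcases eq_or_ne i p.1 with rfl | hne
          · simp [hU', Finset.mem_erase]
          · rw [Finset.mem_erase, mem_intU, mem_intU, (unchanged_some hT D hne).1]
            simp [hne]
        have hWsub : intW D ⊆ intW (D ∪ cn T (some p)) := by
          intro i hi
          have hne : i ≠ p.1 := by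
            rintro rfl
            exact (mem_intU.1 hU) (mem_intW.1 hi).1
          rw [mem_intW] at hi ⊢
          rw [(unchanged_some hT D hne).1, (unchanged_some hT D hne).2]
          exact hi
        have h1 := Finset.card_le_card hWsub
        have h2 : ((intU D).erase p.1).card = (intU D).card - 1 :=
          Finset.card_erase_of_mem hU
        have h3 : 0 < (intU D).card := Finset.card_pos.2 ⟨p.1, hU⟩
        rw [hUeq, h2]
        omega
    · have hUeq : intU (D ∪ cn T (some p)) = intU D := by
        ext i
        rcases eq_or_ne i p.1 with rfl | hne
        · constructor
          · intro h
            exact absurd (intU_anti Finset.subset_union_left h) hU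
          · intro h; exact absurd h hU
        · rw [mem_intU, mem_intU, (unchanged_some hT D hne).1]
      have := intW_card_le hT D (some p)
      rw [hUeq]
      omega

lemma K2sc {T : SimpleGraph (Option (Fin m × Fin n))} (hT : T ≤ starCliques m n)
    (hTree : T.IsTree) (hn : 3 ≤ n) (D : Finset (Option (Fin m × Fin n)))
    (hu : D ≠ Finset.univ) :
    psiS D = 0 ∨ ∃ v, ¬ cn T v ⊆ D ∧ psiS D ≤ 1 + psiD (D ∪ cn T v) := by
  by_cases hU0 : (intU D).card = 0
  · by_cases hW0 : (intW D).card = 0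
    · left
      rw [psiS, hU0, hW0]
    · right
      obtain ⟨w0, hw0⟩ : ∃ w0, w0 ∉ D := by
        by_contra hc
        push_neg at hc
        exact hu (Finset.eq_univ_iff_forall.2 hc)
      refine ⟨w0, fun hs => hw0 (hs (self_mem_cn w0)), ?_⟩
      have h1 := intW_card_le hT D w0
      rw [psiS, psiD, hU0]
      omega
  · right
    obtain ⟨i0, hi0⟩ : (intU D).Nonempty := Finset.card_pos.1 (by omega)
    have hunt : ¬ touched D i0 := mem_intU.1 hi0
    obtain ⟨v, ⟨jv, rfl⟩, ⟨ju, hju, hjumem⟩, ⟨jz, hjz, hjzmem⟩⟩ := spoil hT hTree hn i0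
    have hjuD : some (i0, ju) ∉ D := fun h => hunt ⟨ju, hju, h⟩
    refine ⟨some (i0, jv), Finset.not_subset.2 ⟨some (i0, ju), hjumem, hjuD⟩, ?_⟩
    have hUeq : intU (D ∪ cn T (some (i0, jv))) = (intU D).erase i0 := by
      ext i
      by_cases hne : i = i0
      · rw [hne]
        have htch : touched (D ∪ cn T (some (i0, jv))) i0 :=
          ⟨ju, hju, Finset.mem_union_right _ hjumem⟩
        simp only [mem_intU, htch, not_true_eq_false, false_iff, Finset.mem_erase]
        tauto
      · rw [Finset.mem_erase, mem_intU, mem_intU,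
          (unchanged_some hT D (p := (i0, jv)) hne).1]
        simp [hne]
    have hWsub : insert i0 (intW D) ⊆ intW (D ∪ cn T (some (i0, jv))) := by
      intro i hi
      rcases Finset.mem_insert.1 hi with heq | hiW
      · rw [heq, mem_intW]
        refine ⟨⟨ju, hju, Finset.mem_union_right _ hjumem⟩, ?_⟩
        intro hfin
        have := hfin jz hjz
        rcases Finset.mem_union.1 this with h | h
        · exact hunt ⟨jz, hjz, h⟩
        · exact hjzmem h
      · have hne : i ≠ i0 := by
          rintro rfl
          exact hunt (mem_intW.1 hiW).1
        rw [mem_intW] at hiW ⊢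
        rw [(unchanged_some hT D (p := (i0, jv)) hne).1,
          (unchanged_some hT D (p := (i0, jv)) hne).2]
        exact hiW
    have hi0W : i0 ∉ intW D := fun h => hunt (mem_intW.1 h).1
    have h1 : (intW D).card + 1 ≤ (intW (D ∪ cn T (some (i0, jv)))).card := by
      rw [← Finset.card_insert_of_notMem hi0W]
      exact Finset.card_le_card hWsub
    have h2 : ((intU D).erase i0).card = (intU D).card - 1 := Finset.card_erase_of_mem hi0
    rw [psiS, psiD, hUeq, h2]
    omega

lemma psiD_univ (hn : 3 ≤ n) : psiD (Finset.univ : Finset (Option (Fin m × Fin n))) = 0 := by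
  have hU : intU (Finset.univ : Finset (Option (Fin m × Fin n))) = ∅ := by
    ext i
    simp only [mem_intU, Finset.notMem_empty, iff_false, not_not]
    exact ⟨⟨1, by omega⟩, by simp, Finset.mem_univ _⟩
  have hW : intW (Finset.univ : Finset (Option (Fin m × Fin n))) = ∅ := by
    ext i
    simp only [mem_intW, Finset.notMem_empty, iff_false]
    rintro ⟨-, hnf⟩
    exact hnf (fun j _ => Finset.mem_univ _)
  rw [psiD, hU, hW]
  simp

lemma psiS_univ (hn : 3 ≤ n) : psiS (Finset.univ : Finset (Option (Fin m × Fin n))) = 0 := by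
  have hU : intU (Finset.univ : Finset (Option (Fin m × Fin n))) = ∅ := by
    ext i
    simp only [mem_intU, Finset.notMem_empty, iff_false, not_not]
    exact ⟨⟨1, by omega⟩, by simp, Finset.mem_univ _⟩
  have hW : intW (Finset.univ : Finset (Option (Fin m × Fin n))) = ∅ := by
    ext i
    simp only [mem_intW, Finset.notMem_empty, iff_false]
    rintro ⟨-, hnf⟩
    exact hnf (fun j _ => Finset.mem_univ _)
  rw [psiS, hU, hW]
  simp

lemma le_gammaG_tree {T : SimpleGraph (Option (Fin m × Fin n))} (hT : T ≤ starCliques m n)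
    (hTree : T.IsTree) (hn : 3 ≤ n) :
    m + m / 2 ≤ DomGame.gammaG T := by
  have hmain := (DomGame.le_auxVal T psiD psiS (psiD_univ hn) (psiS_univ hn)
    (fun D v _ _ => K1sc hT D v)
    (fun D hu => K2sc hT hTree hn D hu)
    (Fintype.card (Option (Fin m × Fin n))) ∅ (by simp)).1
  have hU : intU (∅ : Finset (Option (Fin m × Fin n))) = Finset.univ := by
    ext i
    simp only [mem_intU, Finset.mem_univ, iff_true]
    rintro ⟨j, hj, hmem⟩
    simp at hmem
  have hW : intW (∅ : Finset (Option (Fin m × Fin n))) = ∅ := by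
    ext i
    simp only [mem_intW, Finset.notMem_empty, iff_false]
    rintro ⟨⟨j, hj, hmem⟩, -⟩
    simp at hmem
  rw [psiD, hU, hW] at hmain
  simp only [Finset.card_univ, Fintype.card_fin, Finset.card_empty] at hmain
  rw [DomGame.gammaG, DomGame.gVal]
  omega

end
section
open DomGame

lemma sc_connected (m n : ℕ) (hn : 0 < n) : (starCliques m n).Connected := by
  rw [SimpleGraph.connected_iff]
  refine ⟨?_, ⟨none⟩⟩
  have hreach : ∀ u : Option (Fin m × Fin n), (starCliques m n).Reachable u none := by
    intro u
    cases u with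
    | none => exact SimpleGraph.Reachable.refl _
    | some p =>
      by_cases hp : (p.2 : ℕ) = 0
      · exact (sc_adj_some_none.2 hp).reachable
      · have h1 : (starCliques m n).Adj (some p) (some (p.1, ⟨0, hn⟩)) := by
          refine sc_adj_some_some.2 ⟨?_, rfl⟩
          intro h
          apply hp
          rw [h]
        have h2 : (starCliques m n).Adj (some (p.1, (⟨0, hn⟩ : Fin n))) none :=
          sc_adj_some_none.2 rfl
        exact h1.reachable.trans h2.reachable
  intro u v
  exact (hreach u).trans (hreach v).symm


/-- for m = 2r (r ≥ 1) and any n ≥ 3, the graph `starCliques (2r) n`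
is connected and every spanning tree T of it satisfies γ_g(T) − γ_g(G) ≥ r − 1. -/
theorem stmt15 (r n : ℕ) (hr : 1 ≤ r) (hn : 3 ≤ n) :
    (starCliques (2 * r) n).Connected ∧
      ∀ T : SimpleGraph (Option (Fin (2 * r) × Fin n)),
        T ≤ starCliques (2 * r) n → T.IsTree →
          DomGame.gammaG (starCliques (2 * r) n) + (r - 1) ≤ DomGame.gammaG T := by
  constructor
  · exact sc_connected (2 * r) n (by omega)
  · intro T hT hTree
    have h1 : DomGame.gammaG (starCliques (2 * r) n) ≤ 2 * r + 1 :=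
      gammaG_sc_le (2 * r) n (by omega)
    have h2 : 2 * r + (2 * r) / 2 ≤ DomGame.gammaG T := le_gammaG_tree hT hTree hn
    omega
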